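/- There exists an absolute constant C > 0 such that for every prime power q, ∑_{j ≥ 1} 1/(π_q(j) + 1)! ≤ C/q, where π_q(j) is the number of monic irreducible polynomials of degree j over F_q. -/

import Mathlib

open Polynomial Finset IntermediateField

/-- `numIrred F j` is the number of monic irreducible polynomials of degree `j`
over the field `F` (denoted `π_q(j)` when `#F = q`). -/
noncomputable def numIrred (F : Type*) [Field F] (j : ℕ) : ℕ :=
  Nat.card {p : Polynomial F // p.Monic ∧ Irreducible p ∧ p.natDegree = j}

lemma finite_monic_irred (F : Type*) [Field F] [Fintype F] (j : ℕ) :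
    {p : Polynomial F | p.Monic ∧ Irreducible p ∧ p.natDegree = j}.Finite := by
  apply Set.Finite.of_finite_image (f := fun p => fun i : Fin (j+1) => p.coeff i)
    (Set.toFinite _)
  rintro p ⟨hpm, -, hpd⟩ q ⟨hqm, -, hqd⟩ h
  ext n
  by_cases hn : n < j + 1
  · exact congrFun h ⟨n, hn⟩
  · rw [coeff_eq_zero_of_natDegree_lt (by omega), coeff_eq_zero_of_natDegree_lt (by omega)]

lemma countAux (F : Type*) [Field F] [Fintype F] (E : Type*) [Field E] [Algebra F E]
    [FiniteDimensional F E] (j : ℕ) (hj : 0 < j) (hrank : Module.finrank F E = j) :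
    Fintype.card F ^ j ≤ j * numIrred F j + ∑ d ∈ Finset.Icc 1 (j / 2), Fintype.card F ^ d := by
  classical
  have hfinE : Finite E := Module.finite_of_finite F
  have := Fintype.ofFinite E
  have hint : ∀ x : E, IsIntegral F x := fun x => IsIntegral.of_finite F x
  set q := Fintype.card F with hq
  have hcardE : Fintype.card E = q ^ j := by
    rw [Module.card_eq_pow_finrank (K := F) (V := E), hrank]
  set A : Finset E := univ.filter (fun x => (minpoly F x).natDegree = j) with hA
  set B : Finset E := univ.filter (fun x => ¬ (minpoly F x).natDegree = j) with hB
  have hAB : A.card + B.card = q ^ j := by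
    rw [hA, hB, Finset.card_filter_add_card_filter_not, card_univ, hcardE]
  have hAcard : A.card ≤ j * numIrred F j := by
    have h1 : A.card ≤ j * (A.image (minpoly F)).card := by
      apply Finset.card_le_mul_card_image
      intro p hp
      obtain ⟨x0, hx0, rfl⟩ := Finset.mem_image.mp hp
      have hx0deg : (minpoly F x0).natDegree = j := (Finset.mem_filter.mp hx0).2
      have hm : (minpoly F x0).Monic := minpoly.monic (hint x0)
      calc (A.filter (fun a => minpoly F a = minpoly F x0)).card
          ≤ (((minpoly F x0).map (algebraMap F E)).roots).toFinset.card := by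
            apply Finset.card_le_card
            intro x hx
            obtain ⟨-, hx2⟩ := Finset.mem_filter.mp hx
            rw [Multiset.mem_toFinset, mem_roots ((hm.map _).ne_zero)]
            rw [IsRoot, eval_map, ← aeval_def, ← hx2]
            exact minpoly.aeval F x
        _ ≤ (((minpoly F x0).map (algebraMap F E)).roots).card := Multiset.toFinset_card_le _
        _ ≤ ((minpoly F x0).map (algebraMap F E)).natDegree := card_roots' _
        _ = j := by rw [hm.natDegree_map, hx0deg]
    have h2 : (A.image (minpoly F)).card ≤ numIrred F j := by
      have hsub : ↑(A.image (minpoly F)) ⊆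
          {p : Polynomial F | p.Monic ∧ Irreducible p ∧ p.natDegree = j} := by
        intro p hp
        obtain ⟨x, hx, rfl⟩ := Finset.mem_image.mp hp
        exact ⟨minpoly.monic (hint x), minpoly.irreducible (hint x),
          (Finset.mem_filter.mp hx).2⟩
      have := Set.ncard_le_ncard hsub (finite_monic_irred F j)
      rwa [Set.ncard_coe_finset, numIrred, ← Nat.card_coe_set_eq] at *
    calc A.card ≤ j * (A.image (minpoly F)).card := h1
      _ ≤ j * numIrred F j := Nat.mul_le_mul_left _ h2
  have hBcard : B.card ≤ ∑ d ∈ Finset.Icc 1 (j / 2), q ^ d := by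
    have hsub : B ⊆ (Finset.Icc 1 (j / 2)).biUnion
        (fun d => univ.filter (fun x : E => x ^ q ^ d = x)) := by
      intro x hx
      have hxne : (minpoly F x).natDegree ≠ j := (Finset.mem_filter.mp hx).2
      set d := (minpoly F x).natDegree with hd
      have hd1 : 0 < d := minpoly.natDegree_pos (hint x)
      have hdvd : d ∣ j := hrank ▸ minpoly.degree_dvd (hint x)
      have hdle : d ≤ j / 2 := by
        obtain ⟨k, hk⟩ := hdvd
        have hk2 : 2 ≤ k := by
          rcases Nat.lt_or_ge k 2 with h | h
          · interval_cases k <;> omega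
          · exact h
        rw [Nat.le_div_iff_mul_le two_pos]
        calc d * 2 ≤ d * k := Nat.mul_le_mul_left _ hk2
          _ = j := hk.symm
      have hpow : x ^ q ^ d = x := by
        have hKfd : FiniteDimensional F F⟮x⟯ :=
          IntermediateField.adjoin.finiteDimensional (hint x)
        have := Fintype.ofFinite F⟮x⟯
        have hcardK : Fintype.card F⟮x⟯ = q ^ d := by
          rw [Module.card_eq_pow_finrank (K := F) (V := F⟮x⟯),
            IntermediateField.adjoin.finrank (hint x)]
        have hy := FiniteField.pow_card (IntermediateField.AdjoinSimple.gen F x)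
        rw [hcardK] at hy
        have := congrArg (algebraMap F⟮x⟯ E) hy
        rwa [map_pow, IntermediateField.AdjoinSimple.algebraMap_gen] at this
      exact Finset.mem_biUnion.mpr ⟨d, Finset.mem_Icc.mpr ⟨hd1, hdle⟩,
        Finset.mem_filter.mpr ⟨Finset.mem_univ _, hpow⟩⟩
    calc B.card ≤ ((Finset.Icc 1 (j / 2)).biUnion
        (fun d => univ.filter (fun x : E => x ^ q ^ d = x))).card := Finset.card_le_card hsub
      _ ≤ ∑ d ∈ Finset.Icc 1 (j / 2), (univ.filter (fun x : E => x ^ q ^ d = x)).card :=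
        Finset.card_biUnion_le
      _ ≤ ∑ d ∈ Finset.Icc 1 (j / 2), q ^ d := by
        apply Finset.sum_le_sum
        intro d hd
        obtain ⟨hd1, -⟩ := Finset.mem_Icc.mp hd
        have hq2 : 1 < q := Fintype.one_lt_card
        have hne : (X ^ q ^ d - X : E[X]) ≠ 0 :=
          FiniteField.X_pow_card_pow_sub_X_ne_zero E (by omega) hq2
        calc (univ.filter (fun x : E => x ^ q ^ d = x)).card
            ≤ ((X ^ q ^ d - X : E[X]).roots).toFinset.card := by
              apply Finset.card_le_card
              intro x hx
              have hx2 := (Finset.mem_filter.mp hx).2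
              rw [Multiset.mem_toFinset, mem_roots hne]
              simp [IsRoot, sub_eq_zero, hx2]
          _ ≤ ((X ^ q ^ d - X : E[X]).roots).card := Multiset.toFinset_card_le _
          _ ≤ (X ^ q ^ d - X : E[X]).natDegree := card_roots' _
          _ = q ^ d := FiniteField.X_pow_card_pow_sub_X_natDegree_eq E (by omega) hq2
  exact hAB ▸ Nat.add_le_add hAcard hBcard

lemma geomSumIcc (q m : ℕ) (hq : 2 ≤ q) : ∑ d ∈ Finset.Icc 1 m, q ^ d ≤ q ^ (m + 1) := by
  induction m with
  | zero => simp
  | succ m ih =>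
    rw [Finset.sum_Icc_succ_top (by omega)]
    have h1 : q ^ (m + 1) * 2 ≤ q ^ (m + 1) * q := Nat.mul_le_mul_left _ hq
    have h2 : q ^ (m + 1) * q = q ^ (m + 1 + 1) := (pow_succ q (m + 1)).symm
    omega

lemma claimB (F : Type*) [Field F] [Fintype F] (j : ℕ) (hj : 0 < j) :
    Fintype.card F ^ j ≤ 2 * j * (numIrred F j + 1) := by
  classical
  set q := Fintype.card F with hq
  have hq2 : 2 ≤ q := Fintype.one_lt_card
  obtain ⟨p, hchar⟩ := CharP.exists F
  have hp : p.Prime := CharP.char_is_prime F p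
  haveI : Fact p.Prime := ⟨hp⟩
  obtain ⟨n, hpn⟩ := FiniteField.card F p
  set g : F[X] := X ^ q ^ j - X with hg
  have hg0 : g ≠ 0 := FiniteField.X_pow_card_pow_sub_X_ne_zero F hj.ne' hq2
  set E := g.SplittingField with hE
  haveI : Finite E := Module.finite_of_finite F
  haveI := Fintype.ofFinite E
  haveI : CharP E p := charP_of_injective_algebraMap (algebraMap F E).injective p
  have hqpn : q = p ^ (n : ℕ) := hpn.2
  have hsep : g.Separable := by
    rw [hg, hqpn, ← pow_mul]
    exact galois_poly_separable p _ (dvd_pow_self p (by positivity))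
  -- every element of E satisfies x ^ q ^ j = x
  have hfix : ∀ x : E, x ^ q ^ j = x := by
    have hcomm : ∀ r : F, (iterateFrobenius E p (n * j)) (algebraMap F E r) =
        algebraMap F E r := by
      intro r
      rw [iterateFrobenius_def, ← map_pow, pow_mul, ← hqpn]
      congr 1
      exact FiniteField.pow_card_pow j r
    let φ : E →ₐ[F] E := ⟨iterateFrobenius E p (n * j), hcomm⟩
    have hle : Algebra.adjoin F (g.rootSet E) ≤ AlgHom.equalizer φ (AlgHom.id F E) := by
      apply Algebra.adjoin_le
      intro x hx
      rw [mem_rootSet_of_ne hg0] at hx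
      simp only [hg, map_sub, map_pow, aeval_X, sub_eq_zero] at hx
      show φ x = x
      show (iterateFrobenius E p (n * j)) x = x
      rw [iterateFrobenius_def, pow_mul, ← hqpn, hx]
    rw [Polynomial.SplittingField.adjoin_rootSet] at hle
    intro x
    have hx : φ x = x := hle (by trivial)
    have : (iterateFrobenius E p (n * j)) x = x := hx
    rwa [iterateFrobenius_def, pow_mul, ← hqpn] at this
  have hroot : g.rootSet E = Set.univ := by
    rw [Set.eq_univ_iff_forall]
    intro x
    rw [mem_rootSet_of_ne hg0]
    simp [hg, sub_eq_zero, hfix x]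
  have hcardE : Fintype.card E = q ^ j := by
    have key : Fintype.card (g.rootSet E) = g.natDegree :=
      card_rootSet_eq_natDegree hsep (Polynomial.SplittingField.splits g)
    have h1 : Nat.card (g.rootSet E) = g.natDegree := by
      rw [← key, Nat.card_eq_fintype_card]
    have h2 : Nat.card (g.rootSet E) = Nat.card E := by
      rw [hroot]; exact Nat.card_congr (Equiv.Set.univ E)
    have h3 : g.natDegree = q ^ j :=
      FiniteField.X_pow_card_pow_sub_X_natDegree_eq F hj.ne' hq2
    rw [← Nat.card_eq_fintype_card, ← h2, h1, h3]
  have hrank : Module.finrank F E = j := by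
    have h := Module.card_eq_pow_finrank (K := F) (V := E)
    rw [hcardE, ← hq] at h
    exact (Nat.pow_right_injective hq2 h.symm)
  have hmain := countAux F E j hj hrank
  rw [← hq] at hmain
  -- arithmetic
  rcases Nat.lt_or_ge j 3 with h3 | h3
  · interval_cases j
    · rw [show (1:ℕ)/2 = 0 from rfl, Finset.Icc_eq_empty (by omega),
        Finset.sum_empty] at hmain
      omega
    · rw [show (2:ℕ)/2 = 1 from rfl, Finset.Icc_self, Finset.sum_singleton,
        pow_one] at hmain
      have h4 : 2 * q ≤ q ^ 2 := by rw [sq]; exact Nat.mul_le_mul_right q hq2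
      set P := numIrred F 2
      omega
  · have hgs : ∑ d ∈ Finset.Icc 1 (j / 2), q ^ d ≤ q ^ (j / 2 + 1) := geomSumIcc q _ hq2
    have hle : q ^ (j / 2 + 1) ≤ q ^ (j - 1) :=
      Nat.pow_le_pow_right (by omega) (by omega)
    have h2 : q ^ (j - 1) * 2 ≤ q ^ (j - 1) * q := Nat.mul_le_mul_left _ hq2
    have h3' : q ^ (j - 1) * q = q ^ j := by
      rw [← pow_succ]
      congr 1
      omega
    set P := j * numIrred F j with hP
    have : q ^ j ≤ 2 * P := by omega
    calc q ^ j ≤ 2 * P := this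
      _ = 2 * j * numIrred F j := by rw [hP, mul_assoc]
      _ ≤ 2 * j * (numIrred F j + 1) := Nat.mul_le_mul_left _ (Nat.le_succ _)

/-- There is an absolute constant `C > 0` such that for every finite field `F`
with `q` elements, `∑_{j ≥ 1} 1/(π_q(j) + 1)! ≤ C/q`. -/
theorem sum_inv_factorial_numIrred_le : ∃ C : ℝ, 0 < C ∧
    ∀ (F : Type) [Field F] [Fintype F],
    ∑' j : ℕ, (1 : ℝ) / (Nat.factorial (numIrred F (j + 1) + 1) : ℝ) ≤
      C / (Fintype.card F : ℝ) := by
  refine ⟨8, by norm_num, ?_⟩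
  intro F _ _
  set q := Fintype.card F with hq
  have hq2 : 2 ≤ q := Fintype.one_lt_card
  have hq0 : (0 : ℝ) < q := by positivity
  set r : ℝ := (q : ℝ)⁻¹ with hr
  have hr0 : 0 ≤ r := by positivity
  have hrhalf : r ≤ 1 / 2 := by
    rw [hr]
    rw [inv_le_comm₀ hq0 (by norm_num)]
    norm_num
    exact_mod_cast hq2
  have hr1 : r < 1 := lt_of_le_of_lt hrhalf (by norm_num)
  -- the dominating series
  set g : ℕ → ℝ := fun n => 2 * r * ((n : ℝ) * r ^ n + r ^ n) with hgdef
  have H1 : HasSum (fun n : ℕ => (n : ℝ) * r ^ n) (r / (1 - r) ^ 2) :=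
    hasSum_coe_mul_geometric_of_norm_lt_one (by rw [Real.norm_eq_abs, abs_of_nonneg hr0]; exact hr1)
  have H2 : HasSum (fun n : ℕ => r ^ n) (1 / (1 - r)) := by
    simpa [one_div] using hasSum_geometric_of_lt_one hr0 hr1
  have Hg : HasSum g (2 * r * (r / (1 - r) ^ 2 + 1 / (1 - r))) := (H1.add H2).mul_left _
  -- termwise bound
  have key : ∀ n : ℕ, (1 : ℝ) / (Nat.factorial (numIrred F (n + 1) + 1) : ℝ) ≤ g n := by
    intro n
    have hB := claimB F (n + 1) (Nat.succ_pos n)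
    rw [← hq] at hB
    have hfac : numIrred F (n + 1) + 1 ≤ Nat.factorial (numIrred F (n + 1) + 1) :=
      Nat.self_le_factorial _
    have hnat : q ^ (n + 1) ≤ 2 * (n + 1) * Nat.factorial (numIrred F (n + 1) + 1) :=
      le_trans hB (Nat.mul_le_mul_left _ hfac)
    have hfac0 : (0 : ℝ) < (Nat.factorial (numIrred F (n + 1) + 1) : ℝ) := by
      exact_mod_cast Nat.factorial_pos _
    have hgn : g n = 2 * ((n : ℝ) + 1) / (q : ℝ) ^ (n + 1) := by
      rw [hgdef]
      have : (q : ℝ) ≠ 0 := ne_of_gt hq0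
      field_simp [hr]
      rw [hr, inv_pow]
      field_simp
      ring
    rw [hgn, div_le_div_iff₀ hfac0 (by positivity)]
    calc (1 : ℝ) * (q : ℝ) ^ (n + 1) = ((q ^ (n + 1) : ℕ) : ℝ) := by push_cast; ring
      _ ≤ ((2 * (n + 1) * Nat.factorial (numIrred F (n + 1) + 1) : ℕ) : ℝ) := by
          exact_mod_cast hnat
      _ = 2 * ((n : ℝ) + 1) * (Nat.factorial (numIrred F (n + 1) + 1) : ℝ) := by push_cast; ring
  have hsumL : Summable (fun n : ℕ => (1 : ℝ) / (Nat.factorial (numIrred F (n + 1) + 1) : ℝ)) :=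
    Summable.of_nonneg_of_le (fun n => by positivity) key Hg.summable
  calc ∑' j : ℕ, (1 : ℝ) / (Nat.factorial (numIrred F (j + 1) + 1) : ℝ)
      ≤ ∑' n, g n := Summable.tsum_le_tsum key hsumL Hg.summable
    _ = 2 * r * (r / (1 - r) ^ 2 + 1 / (1 - r)) := Hg.tsum_eq
    _ ≤ 8 / q := by
        rw [show (8 : ℝ) / q = 8 * r by rw [hr]; ring]
        have h1r : (1 : ℝ) / 2 ≤ 1 - r := by linarith
        have h1r0 : (0 : ℝ) < 1 - r := by linarith
        have hb : r / (1 - r) ^ 2 + 1 / (1 - r) ≤ 4 := by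
          have e1 : r / (1 - r) ^ 2 ≤ 2 := by
            rw [div_le_iff₀ (by positivity)]
            nlinarith
          have e2 : 1 / (1 - r) ≤ 2 := by
            rw [div_le_iff₀ h1r0]
            linarith
          linarith
        nlinarith
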